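/- Let C be an n-cube (a functor from {0→1}^n) in a category with finite limits, and let C' be an (n-1)-dimensional face of C containing the initial vertex in one coordinate direction, with C'' the opposite face. If C'' is a limit cube (exhibits its initial vertex as the limit of the rest of its diagram), then C is a limit cube if and only if C' is a limit cube. -/

import Mathlib

open CategoryTheory

/-- The vertex poset of the `n`-cube `{0 → 1}ⁿ`, regarded as a category. -/
def CubeVerts (n : ℕ) : Type := Fin n → Bool

noncomputable instance (n : ℕ) : PartialOrder (CubeVerts n) :=
  inferInstanceAs (PartialOrder (Fin n → Bool))

/-- An `n`-cube in a category: a functor from the poset `{0 → 1}ⁿ`.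
It is a *limit cube* if it exhibits the value at the initial vertex `(0,...,0)` as the
limit of the diagram on the remaining `2ⁿ - 1` vertices. -/
def IsLimitCube {𝒞 : Type*} [Category 𝒞] {n : ℕ} (F : CubeVerts n ⥤ 𝒞) : Prop :=
  ∀ (T : 𝒞) (t : ∀ ε : CubeVerts n, ε ≠ (fun _ => false) → (T ⟶ F.obj ε)),
    (∀ (ε δ : CubeVerts n) (hε : ε ≠ fun _ => false) (hδ : δ ≠ fun _ => false) (h : ε ≤ δ),
      t ε hε ≫ F.map (homOfLE h) = t δ hδ) →
    ∃! u : T ⟶ F.obj (fun _ => false),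
      ∀ (ε : CubeVerts n) (hε : ε ≠ fun _ => false),
        u ≫ F.map (homOfLE (fun i => Bool.false_le (ε i))) = t ε hε

/-- Inserting a fixed value in coordinate `i`: the inclusion of a face of the cube. -/
def insFace {n : ℕ} (i : Fin (n + 1)) (b : Bool) (ε : CubeVerts n) : CubeVerts (n + 1) :=
  i.insertNth b ε

theorem insFace_monotone {n : ℕ} (i : Fin (n + 1)) (b : Bool) : Monotone (insFace i b) := by
  intro ε δ h
  intro j
  by_cases hj : j = i
  · subst hj
    have e1 := Fin.insertNth_apply_same (α := fun _ => Bool) j b ε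
    have e2 := Fin.insertNth_apply_same (α := fun _ => Bool) j b δ
    exact le_of_eq (e1.trans e2.symm)
  · obtain ⟨k, rfl⟩ := Fin.exists_succAbove_eq hj
    have e1 := Fin.insertNth_apply_succAbove (α := fun _ => Bool) i b ε k
    have e2 := Fin.insertNth_apply_succAbove (α := fun _ => Bool) i b δ k
    exact e1.le.trans ((h k).trans e2.ge)

/-- The face of an `(n+1)`-cube in coordinate direction `i` at level `b`. -/
noncomputable def cubeFace {𝒞 : Type*} [Category 𝒞] {n : ℕ} (F : CubeVerts (n + 1) ⥤ 𝒞)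
    (i : Fin (n + 1)) (b : Bool) : CubeVerts n ⥤ 𝒞 :=
  (Monotone.functor (insFace_monotone i b)).comp F

section CubeHelpers
variable {n : ℕ}

lemma insFace_apply_same (i : Fin (n + 1)) (b : Bool) (ε : CubeVerts n) :
    insFace i b ε i = b := Fin.insertNth_apply_same (α := fun _ => Bool) i b ε

lemma insFace_apply_succAbove (i : Fin (n + 1)) (b : Bool) (ε : CubeVerts n) (k : Fin n) :
    insFace i b ε (i.succAbove k) = ε k :=
    Fin.insertNth_apply_succAbove (α := fun _ => Bool) i b ε k

lemma eq_insFace (i : Fin (n + 1)) (δ : CubeVerts (n + 1)) :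
    δ = insFace i (δ i) (fun k => δ (i.succAbove k)) := by
  funext j
  by_cases hj : j = i
  · subst hj; simp [insFace]
  · obtain ⟨k, rfl⟩ := Fin.exists_succAbove_eq hj
    simp [insFace]

lemma insFace_zero (i : Fin (n + 1)) :
    insFace i false (fun _ => false) = (fun _ => false : CubeVerts (n + 1)) := by
  funext j
  by_cases hj : j = i
  · subst hj; simp [insFace]
  · obtain ⟨k, rfl⟩ := Fin.exists_succAbove_eq hj
    simp [insFace]

lemma insFace_cases (i : Fin (n + 1)) (δ : CubeVerts (n + 1)) :
    (∃ ε, δ = insFace i false ε) ∨ (∃ ε, δ = insFace i true ε) := by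
  cases hb : δ i with
  | false => exact Or.inl ⟨fun k => δ (i.succAbove k), by rw [← hb]; exact eq_insFace i δ⟩
  | true => exact Or.inr ⟨fun k => δ (i.succAbove k), by rw [← hb]; exact eq_insFace i δ⟩

lemma insFace_le_insFace {i : Fin (n + 1)} {b b' : Bool} {ε ε' : CubeVerts n}
    (hb : b ≤ b') (h : ε ≤ ε') : insFace i b ε ≤ insFace i b' ε' := by
  intro j
  by_cases hj : j = i
  · subst hj; simpa [insFace_apply_same] using hb
  · obtain ⟨k, rfl⟩ := Fin.exists_succAbove_eq hj
    simpa [insFace_apply_succAbove] using h k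

lemma le_of_insFace_le {i : Fin (n + 1)} {b b' : Bool} {ε ε' : CubeVerts n}
    (h : insFace i b ε ≤ insFace i b' ε') : ε ≤ ε' := by
  intro k
  simpa [insFace_apply_succAbove] using h (i.succAbove k)

lemma not_insFace_true_le_false {i : Fin (n + 1)} {ε ε' : CubeVerts n}
    (h : insFace i true ε ≤ insFace i false ε') : False := by
  have := h i
  rw [insFace_apply_same, insFace_apply_same] at this
  exact absurd this (by decide : ¬ (true : Bool) ≤ false)

lemma insFace_false_ne {i : Fin (n + 1)} {ε : CubeVerts n}
    (h : insFace i false ε ≠ (fun _ => false)) : ε ≠ (fun _ => false) := by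
  intro hz
  exact h (by rw [hz]; exact insFace_zero i)

lemma insFace_false_ne_zero (i : Fin (n + 1)) {ε : CubeVerts n}
    (hε : ε ≠ (fun _ => false)) : insFace i false ε ≠ (fun _ => false) := by
  intro h
  apply hε
  funext k
  have := congrFun h (i.succAbove k)
  simpa [insFace_apply_succAbove] using this

lemma insFace_true_ne (i : Fin (n + 1)) (ε : CubeVerts n) :
    insFace i true ε ≠ (fun _ => false) := by
  intro h
  have := congrFun h i
  simp [insFace_apply_same] at this

lemma cubeZero_le {m : ℕ} (ε : CubeVerts m) : (fun _ => false : CubeVerts m) ≤ ε :=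
  fun j => Bool.false_le (ε j)

lemma ne_zero_mono {m : ℕ} {ε ε' : CubeVerts m} (h : ε ≤ ε') (hε : ε ≠ (fun _ => false)) :
    ε' ≠ (fun _ => false) := by
  intro hz
  exact hε (le_antisymm (le_trans h (le_of_eq hz)) (cubeZero_le ε))

lemma bool_eq_false {b : Bool} (h : ¬ b = true) : b = false := by simpa using h

lemma le_insFace_true (i : Fin (n + 1)) {δ : CubeVerts (n + 1)} (hb : δ i = true) :
    insFace i true (fun _ => false) ≤ δ := by
  intro j
  by_cases hj : j = i
  · subst hj; simp [insFace_apply_same, hb]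
  · obtain ⟨k, rfl⟩ := Fin.exists_succAbove_eq hj
    exact (insFace_apply_succAbove i true _ k).le.trans (Bool.false_le _)

lemma extract_eq (i : Fin (n + 1)) {δ : CubeVerts (n + 1)} (hb : δ i = false) :
    insFace i false (fun k => δ (i.succAbove k)) = δ := by
  rw [← hb]; exact (eq_insFace i δ).symm

lemma extract_ne (i : Fin (n + 1)) {δ : CubeVerts (n + 1)} (hδ : δ ≠ (fun _ => false))
    (hb : δ i = false) : (fun k => δ (i.succAbove k)) ≠ (fun _ => false : CubeVerts n) := by
  intro hz
  apply hδ
  rw [← extract_eq i hb, hz, insFace_zero]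

lemma Fmap_trans {𝒞 : Type*} [Category 𝒞] {m : ℕ} (F : CubeVerts m ⥤ 𝒞) {a b c : CubeVerts m}
    (h1 : a ≤ b) (h2 : b ≤ c) :
    F.map (homOfLE h1) ≫ F.map (homOfLE h2) = F.map (homOfLE (le_trans h1 h2)) := by
  rw [← F.map_comp, homOfLE_comp]

lemma Fmap_refl {𝒞 : Type*} [Category 𝒞] {m : ℕ} (F : CubeVerts m ⥤ 𝒞) {a : CubeVerts m}
    (h : a ≤ a) : F.map (homOfLE h) = 𝟙 (F.obj a) := by
  rw [show homOfLE h = 𝟙 a from rfl, F.map_id]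

/-- If the face of an `(n+1)`-cube opposite to the initial vertex in direction `i` is a
limit cube, then the cube is a limit cube iff the face containing the initial vertex is. -/
theorem stmt12 {𝒞 : Type*} [Category 𝒞] [Limits.HasFiniteLimits 𝒞] (n : ℕ)
    (F : CubeVerts (n + 1) ⥤ 𝒞) (i : Fin (n + 1))
    (h'' : IsLimitCube (cubeFace F i true)) :
    IsLimitCube F ↔ IsLimitCube (cubeFace F i false) := by
  constructor
  · -- F is a limit cube → the bottom face is a limit cube
    intro hF T s hs
    have hsF : ∀ (ε δ : CubeVerts n) (hε : ε ≠ fun _ => false) (hδ : δ ≠ fun _ => false)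
        (h : ε ≤ δ),
        s ε hε ≫ F.map (homOfLE (insFace_monotone i false h)) = s δ hδ := hs
    -- the cone over the punctured top face induced by s
    obtain ⟨v, hv, hvu⟩ := h'' T
      (fun ε hε => s ε hε ≫
        F.map (homOfLE (insFace_le_insFace (Bool.false_le true) (le_refl ε))))
      (by
        intro ε δ hε hδ h
        show (s ε hε ≫ F.map (homOfLE (insFace_le_insFace (Bool.false_le true) (le_refl ε))))
            ≫ F.map (homOfLE (insFace_monotone i true h)) =
          s δ hδ ≫ F.map (homOfLE (insFace_le_insFace (Bool.false_le true) (le_refl δ)))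
        erw [Category.assoc, Fmap_trans,
          ← Fmap_trans F (insFace_monotone i false h)
            (insFace_le_insFace (Bool.false_le true) (le_refl δ)),
          ← Category.assoc, hsF ε δ hε hδ h]; rfl)
    have hvF : ∀ (ε : CubeVerts n) (hε : ε ≠ fun _ => false),
        v ≫ F.map (homOfLE (insFace_monotone i true (cubeZero_le ε))) =
          s ε hε ≫ F.map (homOfLE (insFace_le_insFace (Bool.false_le true) (le_refl ε))) := hv
    -- the cone over the punctured (n+1)-cube
    obtain ⟨u, hu, huu⟩ := hF T
      (fun δ hδ =>
        if hb : δ i = true then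
          v ≫ F.map (homOfLE (le_insFace_true i hb))
        else
          s (fun k => δ (i.succAbove k)) (extract_ne i hδ (bool_eq_false hb)) ≫
            F.map (homOfLE (le_of_eq (extract_eq i (bool_eq_false hb)))))
      (by
        intro δ δ' hδ hδ' hle
        rcases insFace_cases i δ with ⟨ε, rfl⟩ | ⟨ε, rfl⟩ <;>
          rcases insFace_cases i δ' with ⟨ε', rfl⟩ | ⟨ε', rfl⟩
        · -- false ≤ false
          have hbε : ¬ (insFace i false ε i = true) := by simp [insFace_apply_same]
          have hbε' : ¬ (insFace i false ε' i = true) := by simp [insFace_apply_same]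
          erw [dif_neg hbε, dif_neg hbε']
          have hAB : (fun k => insFace i false ε (i.succAbove k)) ≤
              (fun k => insFace i false ε' (i.succAbove k) : CubeVerts n) :=
            fun k => hle (i.succAbove k)
          erw [Category.assoc, Fmap_trans,
            ← Fmap_trans F (insFace_monotone i false hAB)
              (le_of_eq (extract_eq i (bool_eq_false hbε'))),
            ← Category.assoc, hsF _ _ _ (extract_ne i hδ' (bool_eq_false hbε')) hAB]
          rfl
        · -- false ≤ true
          have hbε : ¬ (insFace i false ε i = true) := by simp [insFace_apply_same]
          erw [dif_neg hbε, dif_pos (insFace_apply_same i true ε')]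
          have hε : ε ≠ (fun _ => false) := insFace_false_ne hδ
          have hε' : ε' ≠ (fun _ => false) := ne_zero_mono (le_of_insFace_le hle) hε
          have hAε' : (fun k => insFace i false ε (i.succAbove k) : CubeVerts n) ≤ ε' :=
            fun k => by simpa [insFace_apply_succAbove] using hle (i.succAbove k)
          erw [Category.assoc, Fmap_trans,
            ← Fmap_trans F (insFace_monotone i false hAε')
              (insFace_le_insFace (Bool.false_le true) (le_refl ε')),
            ← Category.assoc, hsF _ _ _ hε' hAε', hvF ε' hε']
          rfl
        · -- true ≤ false : impossible
          exact (not_insFace_true_le_false hle).elim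
        · -- true ≤ true
          erw [dif_pos (insFace_apply_same i true ε), dif_pos (insFace_apply_same i true ε'),
            Category.assoc, Fmap_trans])
    -- the factorization through the bottom face, in F-form
    have huf : ∀ (ε : CubeVerts n) (hε : ε ≠ (fun _ => false)),
        u ≫ F.map (homOfLE (cubeZero_le (insFace i false ε))) = s ε hε := by
      intro ε hε
      have h1 := hu (insFace i false ε) (insFace_false_ne_zero i hε)
      erw [dif_neg (show ¬ (insFace i false ε i = true) by simp [insFace_apply_same])] at h1
      have hAε : (fun k => insFace i false ε (i.succAbove k) : CubeVerts n) ≤ ε :=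
        fun k => le_of_eq (insFace_apply_succAbove i false ε k)
      erw [hsF _ ε _ hε hAε] at h1
      exact h1
    have hut : ∀ ε : CubeVerts n,
        u ≫ F.map (homOfLE (cubeZero_le (insFace i true ε))) =
          v ≫ F.map (homOfLE (insFace_le_insFace (le_refl true) (cubeZero_le ε))) := by
      intro ε
      have h1 := hu (insFace i true ε) (insFace_true_ne i ε)
      erw [dif_pos (insFace_apply_same i true ε)] at h1
      exact h1
    refine ⟨u ≫ F.map (homOfLE (le_of_eq (insFace_zero i).symm)), ?_, ?_⟩
    · intro ε hε
      have key : (u ≫ F.map (homOfLE (le_of_eq (insFace_zero i).symm))) ≫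
          F.map (homOfLE (insFace_monotone i false (cubeZero_le ε))) = s ε hε := by
        erw [Category.assoc, Fmap_trans]
        exact huf ε hε
      exact key
    · intro w hw
      have hwF : ∀ (ε : CubeVerts n) (hε : ε ≠ fun _ => false),
          w ≫ F.map (homOfLE (insFace_monotone i false (cubeZero_le ε))) = s ε hε := hw
      -- w composed to the initial vertex of the top face equals v
      have hwv : w ≫ F.map (homOfLE
          (insFace_le_insFace (Bool.false_le true)
            (le_refl (fun _ => false : CubeVerts n)))) = v := by
        apply hvu
        intro ε' hε'
        show (w ≫ F.map (homOfLE (insFace_le_insFace (Bool.false_le true)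
            (le_refl (fun _ => false : CubeVerts n)))))
            ≫ F.map (homOfLE (insFace_monotone i true (cubeZero_le ε'))) =
          s ε' hε' ≫ F.map (homOfLE (insFace_le_insFace (Bool.false_le true) (le_refl ε')))
        erw [Category.assoc, Fmap_trans,
          ← Fmap_trans F (insFace_monotone i false (cubeZero_le ε'))
            (insFace_le_insFace (Bool.false_le true) (le_refl ε')),
          ← Category.assoc, hwF ε' hε']
        rfl
      have hwu : w ≫ F.map (homOfLE (le_of_eq (insFace_zero i))) = u := by
        apply huu
        intro δ hδ
        rcases insFace_cases i δ with ⟨ε, rfl⟩ | ⟨ε, rfl⟩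
        · erw [dif_neg (show ¬ (insFace i false ε i = true) by simp [insFace_apply_same])]
          have hAε : (fun k => insFace i false ε (i.succAbove k) : CubeVerts n) ≤ ε :=
            fun k => le_of_eq (insFace_apply_succAbove i false ε k)
          erw [hsF _ ε _ (insFace_false_ne hδ) hAε, Category.assoc, Fmap_trans]
          exact hwF ε (insFace_false_ne hδ)
        · erw [dif_pos (insFace_apply_same i true ε), Category.assoc, Fmap_trans,
            ← Fmap_trans F (insFace_le_insFace (Bool.false_le true)
              (le_refl (fun _ => false : CubeVerts n)))
              (insFace_le_insFace (le_refl true) (cubeZero_le ε)),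
            ← Category.assoc, hwv]
          rfl
      have final : w ≫ F.map (homOfLE (le_trans (le_of_eq (insFace_zero i))
          (le_of_eq (insFace_zero i).symm))) = w := by
        erw [Fmap_refl]
        exact Category.comp_id w
      erw [← hwu, Category.assoc, Fmap_trans, final]
  · -- the bottom face is a limit cube → F is a limit cube
    intro hC' T t ht
    obtain ⟨u, hu, huu⟩ := hC' T
      (fun ε hε => t (insFace i false ε) (insFace_false_ne_zero i hε))
      (by
        intro ε δ hε hδ h
        exact ht _ _ _ _ (insFace_monotone i false h))
    have huF : ∀ (ε : CubeVerts n) (hε : ε ≠ fun _ => false),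
        u ≫ F.map (homOfLE (insFace_monotone i false (cubeZero_le ε))) =
          t (insFace i false ε) (insFace_false_ne_zero i hε) := hu
    obtain ⟨v, hv, hvu⟩ := h'' T
      (fun ε _ => t (insFace i true ε) (insFace_true_ne i ε))
      (by
        intro ε δ hε hδ h
        exact ht _ _ _ _ (insFace_monotone i true h))
    -- the value of t at the initial vertex of the top face equals v
    have e1 : t (insFace i true (fun _ => false))
        (insFace_true_ne i (fun _ => false)) = v := by
      apply hvu
      intro ε hε
      exact ht _ _ _ _ (insFace_monotone i true (cubeZero_le ε))
    -- u composed to the initial vertex of the top face equals v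
    have e2 : u ≫ F.map (homOfLE (insFace_le_insFace (Bool.false_le true)
        (le_refl (fun _ => false : CubeVerts n)))) = v := by
      apply hvu
      intro ε hε
      show (u ≫ F.map (homOfLE (insFace_le_insFace (Bool.false_le true)
          (le_refl (fun _ => false : CubeVerts n)))))
          ≫ F.map (homOfLE (insFace_monotone i true (cubeZero_le ε))) =
        t (insFace i true ε) (insFace_true_ne i ε)
      erw [Category.assoc, Fmap_trans,
        ← Fmap_trans F (insFace_monotone i false (cubeZero_le ε))
          (insFace_le_insFace (Bool.false_le true) (le_refl ε)),
        ← Category.assoc, huF ε hε]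
      exact ht _ _ _ _ (insFace_le_insFace (Bool.false_le true) (le_refl ε))
    refine ⟨u ≫ F.map (homOfLE (le_of_eq (insFace_zero i))), ?_, ?_⟩
    · intro δ hδ
      rcases insFace_cases i δ with ⟨ε, rfl⟩ | ⟨ε, rfl⟩
      · have key : (u ≫ F.map (homOfLE (le_of_eq (insFace_zero i)))) ≫
            F.map (homOfLE (cubeZero_le (insFace i false ε))) =
              t (insFace i false ε) hδ := by
          erw [Category.assoc, Fmap_trans]
          exact huF ε (insFace_false_ne hδ)
        exact key
      · have key : (u ≫ F.map (homOfLE (le_of_eq (insFace_zero i)))) ≫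
            F.map (homOfLE (cubeZero_le (insFace i true ε))) =
              t (insFace i true ε) hδ := by
          erw [Category.assoc, Fmap_trans,
            ← Fmap_trans F (insFace_le_insFace (Bool.false_le true)
              (le_refl (fun _ => false : CubeVerts n)))
              (insFace_le_insFace (le_refl true) (cubeZero_le ε)),
            ← Category.assoc, e2, ← e1]
          exact ht _ _ _ _ (insFace_le_insFace (le_refl true) (cubeZero_le ε))
        exact key
    · intro w hw
      have hwu : w ≫ F.map (homOfLE (le_of_eq (insFace_zero i).symm)) = u := by
        apply huu
        intro ε hε
        show (w ≫ F.map (homOfLE (le_of_eq (insFace_zero i).symm)))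
            ≫ F.map (homOfLE (insFace_monotone i false (cubeZero_le ε))) =
          t (insFace i false ε) (insFace_false_ne_zero i hε)
        erw [Category.assoc, Fmap_trans]
        exact hw _ _
      have final : w ≫ F.map (homOfLE (le_trans (le_of_eq (insFace_zero i).symm)
          (le_of_eq (insFace_zero i)))) = w := by
        erw [Fmap_refl]
        exact Category.comp_id w
      erw [← hwu, Category.assoc, Fmap_trans, final]
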